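/- Let 𝔛 be a Bourgain–Delbaen space with constant C = sup_q ‖i_q‖, set M_q = span{d_γ : γ ∈ Δ_q}, and define c_γ* = 0 for γ ∈ Δ_0, c_γ* = e_γ* ∘ i_q ∘ r_q for γ ∈ Δ_{q+1}, and d_γ* = e_γ* − c_γ*. If the finite dimensional decomposition (M_q)_q of 𝔛 is shrinking (i.e., for every f ∈ 𝔛*, ‖f ∘ (I − P_{[0,q]})‖ → 0 as q → ∞, where P_{[0,q]} x = i_q(r_q(x))), then 𝔛* equals the closed linear span of (d_γ*)_{γ∈Γ}; in particular 𝔛* is C-isomorphic to ℓ1. -/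

import Mathlib

open scoped ENNReal
open Filter Topology

set_option maxHeartbeats 1000000
set_option synthInstance.maxHeartbeats 400000

noncomputable section

/-- `ℓ∞(Γ)`. -/
abbrev Linf (Γ : Type*) : Type _ := lp (fun _ : Γ => ℝ) ∞

namespace BD

variable {Γ : Type*}

/-- The evaluation map on `ℓ∞(Γ)`, as a linear map. -/
def evalLM (γ : Γ) : Linf Γ →ₗ[ℝ] ℝ where
  toFun f := f γ
  map_add' f g := by simp
  map_smul' c f := by simp

/-- The evaluation functional `e_γ^*` on `ℓ∞(Γ)`. -/
def evalL (γ : Γ) : Linf Γ →L[ℝ] ℝ :=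
  LinearMap.mkContinuous (evalLM γ) 1 fun f => by
    rw [one_mul]
    exact lp.norm_apply_le_norm ENNReal.top_ne_zero f γ

/-- The restriction map `ℓ∞(Γ) → ℓ∞(A)`, as a linear map. -/
def restrLM (A : Finset Γ) : Linf Γ →ₗ[ℝ] (↥A → ℝ) where
  toFun f γ := f γ.1
  map_add' f g := by ext γ; simp
  map_smul' c f := by ext γ; simp

/-- The restriction operator `r_A : ℓ∞(Γ) → ℓ∞(A)` for a finite set `A ⊆ Γ`. -/
def restrCLM (A : Finset Γ) : Linf Γ →L[ℝ] (↥A → ℝ) :=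
  LinearMap.mkContinuous (restrLM A) 1 fun f => by
    rw [one_mul]
    refine (pi_norm_le_iff_of_nonneg (norm_nonneg f)).2 fun γ => ?_
    exact lp.norm_apply_le_norm ENNReal.top_ne_zero f γ.1

/-- The data defining a Bourgain-Delbaen space: a strictly increasing sequence of
nonempty finite subsets of `Γ` covering `Γ`, together with a uniformly bounded compatible
sequence of extension operators. -/
structure System (Γ : Type*) where
  Γs : ℕ → Finset Γ
  strict : StrictMono Γs
  nonempty : ∀ q, (Γs q).Nonempty
  covers : ∀ γ : Γ, ∃ q, γ ∈ Γs q
  i : ∀ q, (↥(Γs q) → ℝ) →L[ℝ] Linf Γ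
  extension : ∀ q (x : ↥(Γs q) → ℝ) (γ : ↥(Γs q)), i q x γ.1 = x γ
  compat : ∀ p q, p < q → ∀ x : ↥(Γs p) → ℝ, i p x = i q (restrCLM (Γs q) (i p x))
  bdd : BddAbove (Set.range fun q => ‖i q‖)

/-- `C = sup_q ‖i_q‖`. -/
def System.C (S : System Γ) : ℝ := ⨆ q, ‖S.i q‖

/-- `Δ_0 = Γ_0`, `Δ_q = Γ_q \ Γ_{q-1}`. -/
def System.Δ (S : System Γ) : ℕ → Finset Γ := fun q =>
  letI := Classical.decEq Γ
  match q with
  | 0 => S.Γs 0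
  | q + 1 => S.Γs (q + 1) \ S.Γs q

/-- The unique `q` with `γ ∈ Δ_q`. -/
def System.rk (S : System Γ) (γ : Γ) : ℕ :=
  letI := Classical.decEq Γ
  Nat.find (S.covers γ)

/-- The vector `d_γ = i_q (e_γ)` for `γ ∈ Δ_q`. -/
def System.dvec (S : System Γ) (γ : Γ) : Linf Γ :=
  letI := Classical.decEq Γ
  S.i (S.rk γ) fun δ => if (δ : Γ) = γ then 1 else 0

/-- `M_q = span {d_γ : γ ∈ Δ_q}`. -/
def System.M (S : System Γ) (q : ℕ) : Submodule ℝ (Linf Γ) :=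
  Submodule.span ℝ (S.dvec '' (S.Δ q : Set Γ))

/-- The Bourgain-Delbaen space: the closed linear span of the `d_γ`'s in `ℓ∞(Γ)`. -/
def System.space (S : System Γ) : Submodule ℝ (Linf Γ) :=
  (Submodule.span ℝ (Set.range S.dvec)).topologicalClosure


section ShortcutInstances

noncomputable instance (priority := 10000) instLinfNACG (Γ : Type*) :
    NormedAddCommGroup (Linf Γ) := inferInstance

noncomputable instance (priority := 10000) instLinfNS (Γ : Type*) :
    NormedSpace ℝ (Linf Γ) := inferInstance

noncomputable instance (priority := 10000) instSpaceNACG (S : System Γ) :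
    NormedAddCommGroup ↥S.space := inferInstance

noncomputable instance (priority := 10000) instSpaceNS (S : System Γ) :
    NormedSpace ℝ ↥S.space := inferInstance

noncomputable instance (priority := 10000) instDualNACG (S : System Γ) :
    NormedAddCommGroup (↥S.space →L[ℝ] ℝ) := inferInstance

noncomputable instance (priority := 10000) instDualNS (S : System Γ) :
    NormedSpace ℝ (↥S.space →L[ℝ] ℝ) := inferInstance

end ShortcutInstances

lemma dvec_mem (S : System Γ) (γ : Γ) : S.dvec γ ∈ S.space :=
  Submodule.le_topologicalClosure _ (Submodule.subset_span ⟨γ, rfl⟩)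

end BD

namespace BD

variable {Γ : Type*}

/-- The evaluation functional `e_γ^*` restricted to the Bourgain–Delbaen space. -/
def evalS (S : System Γ) (γ : Γ) : ↥S.space →L[ℝ] ℝ :=
  (evalL γ).comp S.space.subtypeL

/-- The functional `e_γ^* ∘ i_p ∘ r_p` on the Bourgain–Delbaen space. -/
def cAt (S : System Γ) (p : ℕ) (γ : Γ) : ↥S.space →L[ℝ] ℝ :=
  ((evalL γ).comp ((S.i p).comp (restrCLM (S.Γs p)))).comp S.space.subtypeL

/-- `c_γ^* = 0` if `γ ∈ Δ_0`, and `c_γ^* = e_γ^* ∘ i_q ∘ r_q` if `γ ∈ Δ_{q+1}`. -/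
def cstar (S : System Γ) (γ : Γ) : ↥S.space →L[ℝ] ℝ :=
  if S.rk γ = 0 then 0 else cAt S (S.rk γ - 1) γ

/-- `d_γ^* = e_γ^* - c_γ^*`. -/
def dstar (S : System Γ) (γ : Γ) : ↥S.space →L[ℝ] ℝ :=
  evalS S γ - cstar S γ

end BD

namespace BD

variable {Γ : Type*}

noncomputable instance (priority := 10000) instDualSubNACG (S : System Γ)
    (p : Submodule ℝ (↥S.space →L[ℝ] ℝ)) : NormedAddCommGroup ↥p := inferInstance

noncomputable instance (priority := 10000) instDualSubNS (S : System Γ)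
    (p : Submodule ℝ (↥S.space →L[ℝ] ℝ)) : NormedSpace ℝ ↥p := inferInstance

/-- The closed linear span of the biorthogonal functionals `(d_γ^*)_{γ∈Γ}` in the dual of the
Bourgain–Delbaen space. -/
def dstarSpan (S : System Γ) : Submodule ℝ (↥S.space →L[ℝ] ℝ) :=
  (Submodule.span ℝ (Set.range (dstar S))).topologicalClosure

lemma i_restr_dvec (S : System Γ) (q : ℕ) (γ : Γ) :
    S.i q (restrCLM (S.Γs q) (S.dvec γ)) ∈ Submodule.span ℝ (Set.range S.dvec) := by
  classical
  rcases lt_trichotomy (S.rk γ) q with h | h | h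
  · have hc := (S.compat (S.rk γ) q h
      (letI := Classical.decEq Γ; fun δ => if (δ : Γ) = γ then 1 else 0)).symm
    have : S.i q (restrCLM (S.Γs q) (S.dvec γ)) = S.dvec γ := hc
    rw [this]
    exact Submodule.subset_span ⟨γ, rfl⟩
  · have hres : restrCLM (S.Γs q) (S.dvec γ) =
        (letI := Classical.decEq Γ; fun δ : ↥(S.Γs q) => if (δ : Γ) = γ then 1 else 0) := by
      funext δ
      have hδ : (δ : Γ) ∈ S.Γs (S.rk γ) := by rw [h]; exact δ.2
      have := S.extension (S.rk γ)
        (letI := Classical.decEq Γ; fun δ' => if (δ' : Γ) = γ then 1 else 0) ⟨δ.1, hδ⟩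
      exact this
    rw [hres]
    have : S.i q (letI := Classical.decEq Γ;
        fun δ : ↥(S.Γs q) => if (δ : Γ) = γ then 1 else 0) = S.dvec γ := by
      rw [System.dvec]; subst h; rfl
    rw [this]
    exact Submodule.subset_span ⟨γ, rfl⟩
  · have hres : restrCLM (S.Γs q) (S.dvec γ) = 0 := by
      funext δ
      have hδ : (δ : Γ) ∈ S.Γs (S.rk γ) := S.strict.monotone h.le δ.2
      have hext := S.extension (S.rk γ)
        (letI := Classical.decEq Γ; fun δ' => if (δ' : Γ) = γ then 1 else 0) ⟨δ.1, hδ⟩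
      have hne : (δ : Γ) ≠ γ := by
        intro he
        have hmem : γ ∈ S.Γs q := he ▸ δ.2
        have hle : S.rk γ ≤ q := Nat.find_le hmem
        exact absurd hle (not_le.mpr h)
      have : restrCLM (S.Γs q) (S.dvec γ) δ = S.dvec γ δ.1 := rfl
      rw [this]
      show S.dvec γ δ.1 = 0
      rw [System.dvec]
      rw [hext]
      simp [hne]
    rw [hres]
    rw [map_zero]
    exact Submodule.zero_mem _

lemma Pmem (S : System Γ) (q : ℕ) {x : Linf Γ} (hx : x ∈ S.space) :
    S.i q (restrCLM (S.Γs q) x) ∈ S.space := by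
  have hmaps : Set.MapsTo (fun y : Linf Γ => S.i q (restrCLM (S.Γs q) y))
      (Submodule.span ℝ (Set.range S.dvec) : Set (Linf Γ))
      (Submodule.span ℝ (Set.range S.dvec) : Set (Linf Γ)) := by
    intro y hy
    have hle : Submodule.span ℝ (Set.range S.dvec) ≤
        (Submodule.span ℝ (Set.range S.dvec)).comap
          (((S.i q).comp (restrCLM (S.Γs q))) : Linf Γ →ₗ[ℝ] Linf Γ) := by
      rw [Submodule.span_le]
      rintro _ ⟨γ, rfl⟩
      exact i_restr_dvec S q γ
    exact hle hy
  have hc : Continuous fun y : Linf Γ => S.i q (restrCLM (S.Γs q) y) :=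
    ((S.i q).comp (restrCLM (S.Γs q))).continuous
  have hx' : x ∈ closure (Submodule.span ℝ (Set.range S.dvec) : Set (Linf Γ)) := by
    rw [← Submodule.topologicalClosure_coe]
    exact hx
  have := map_mem_closure hc hx' hmaps
  rw [System.space, SetLike.mem_coe.symm, Submodule.topologicalClosure_coe]
  exact this

/-- The Bourgain–Delbaen projection `P_{[0,q]} = i_q ∘ r_q`, as an operator on the
Bourgain–Delbaen space. -/
def proj (S : System Γ) (q : ℕ) : ↥S.space →L[ℝ] ↥S.space :=
  ContinuousLinearMap.codRestrict
    (((S.i q).comp (restrCLM (S.Γs q))).comp S.space.subtypeL) S.space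
    fun x => Pmem S q x.2

end BD

namespace BD
variable {Γ : Type*}

open Finset in
lemma System.rk_mem (S : System Γ) (γ : Γ) : γ ∈ S.Γs (S.rk γ) := by
  letI := Classical.decEq Γ
  exact Nat.find_spec (S.covers γ)

lemma System.rk_le (S : System Γ) {γ : Γ} {q : ℕ} (h : γ ∈ S.Γs q) : S.rk γ ≤ q := by
  letI := Classical.decEq Γ
  exact Nat.find_le h

lemma System.not_mem_lt_rk (S : System Γ) {γ : Γ} {p : ℕ} (h : p < S.rk γ) : γ ∉ S.Γs p := by
  letI := Classical.decEq Γ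
  exact Nat.find_min (S.covers γ) h

/-- The indicator vector `e_η` in `ℓ∞(A)`. -/
def eSingle (A : Finset Γ) (η : Γ) : ↥A → ℝ := fun δ =>
  letI := Classical.decEq Γ
  if (δ : Γ) = η then 1 else 0

lemma eSingle_decomp (A : Finset Γ) (v : ↥A → ℝ) :
    v = ∑ η : ↥A, v η • eSingle A ↑η := by
  classical
  funext δ
  simp only [Finset.sum_apply, Pi.smul_apply, eSingle, smul_eq_mul]
  rw [Finset.sum_eq_single δ]
  · simp
  · intro b _ hb
    rw [if_neg, mul_zero]
    exact fun h => hb (Subtype.ext h).symm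
  · simp

lemma dvec_eq (S : System Γ) (γ : Γ) : S.dvec γ = S.i (S.rk γ) (eSingle (S.Γs (S.rk γ)) γ) := rfl

lemma norm_eSingle_le (A : Finset Γ) (η : Γ) : ‖eSingle A η‖ ≤ 1 := by
  classical
  refine (pi_norm_le_iff_of_nonneg zero_le_one).2 fun δ => ?_
  simp only [eSingle]
  split_ifs <;> simp

end BD
namespace BD
variable {Γ : Type*}

lemma System.rk_eq_of_mem_not_mem (S : System Γ) {γ : Γ} {q : ℕ}
    (h1 : γ ∈ S.Γs (q + 1)) (h2 : γ ∉ S.Γs q) : S.rk γ = q + 1 := by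
  refine le_antisymm (S.rk_le h1) ?_
  by_contra h
  exact h2 (S.strict.monotone (Nat.lt_succ_iff.mp (not_le.mp h)) (S.rk_mem γ))

lemma i_eSingle_eq_dvec (S : System Γ) {γ : Γ} {q : ℕ} (h : S.rk γ = q) :
    S.i q (eSingle (S.Γs q) γ) = S.dvec γ := by
  subst h; rfl

lemma i_mem_span (S : System Γ) (q : ℕ) (v : ↥(S.Γs q) → ℝ) :
    S.i q v ∈ Submodule.span ℝ (S.dvec '' (S.Γs q : Set Γ)) := by
  induction q with
  | zero =>
    rw [eSingle_decomp _ v, map_sum]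
    refine Submodule.sum_mem _ fun η _ => ?_
    rw [map_smul]
    refine Submodule.smul_mem _ _ (Submodule.subset_span ?_)
    have hrk : S.rk ↑η = 0 := Nat.le_zero.mp (S.rk_le η.2)
    exact ⟨↑η, η.2, (i_eSingle_eq_dvec S hrk).symm⟩
  | succ q ih =>
    have hmono : S.Γs q ⊆ S.Γs (q + 1) := (S.strict (Nat.lt_succ_self q)).subset
    set w : ↥(S.Γs (q + 1)) → ℝ := v with hw
    set v' : ↥(S.Γs q) → ℝ := fun δ => w ⟨↑δ, hmono δ.2⟩ with hv'
    set u : ↥(S.Γs (q + 1)) → ℝ := w - restrCLM (S.Γs (q + 1)) (S.i q v') with hu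
    have hdecomp : S.i (q + 1) w = S.i q v' + S.i (q + 1) u := by
      rw [hu, map_sub, ← S.compat q (q + 1) (Nat.lt_succ_self q) v']
      abel
    rw [hdecomp]
    refine Submodule.add_mem _ ?_ ?_
    · exact Submodule.span_mono (Set.image_mono hmono) (ih v')
    · rw [eSingle_decomp _ u, map_sum]
      refine Submodule.sum_mem _ fun η _ => ?_
      rw [map_smul]
      by_cases hmem : (η : Γ) ∈ S.Γs q
      · have hz : u η = 0 := by
          have : restrCLM (S.Γs (q + 1)) (S.i q v') η = v' ⟨↑η, hmem⟩ :=
            S.extension q v' ⟨↑η, hmem⟩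
          simp only [hu, Pi.sub_apply, this, hv', hw]
          exact sub_eq_zero_of_eq (Eq.trans (congrArg v (Subtype.ext rfl)) this.symm)
        rw [hz, zero_smul]
        exact Submodule.zero_mem _
      · refine Submodule.smul_mem _ _ (Submodule.subset_span ?_)
        have hrk : S.rk ↑η = q + 1 := S.rk_eq_of_mem_not_mem η.2 hmem
        exact ⟨↑η, η.2, (i_eSingle_eq_dvec S hrk).symm⟩

lemma i_mem_space (S : System Γ) (q : ℕ) (v : ↥(S.Γs q) → ℝ) : S.i q v ∈ S.space := by
  refine Submodule.le_topologicalClosure _ ?_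
  refine Submodule.span_mono ?_ (i_mem_span S q v)
  rintro x ⟨γ, _, rfl⟩; exact ⟨γ, rfl⟩

end BD
namespace BD
variable {Γ : Type*}

lemma evalL_apply (γ : Γ) (f : Linf Γ) : evalL γ f = f γ := rfl

lemma evalS_apply (S : System Γ) (γ : Γ) (x : ↥S.space) : evalS S γ x = (x : Linf Γ) γ := rfl

lemma restr_decomp (S : System Γ) (q : ℕ) (y : Linf Γ) :
    restrCLM (S.Γs q) y = ∑ η : ↥(S.Γs q), y ↑η • eSingle (S.Γs q) ↑η :=
  eSingle_decomp (S.Γs q) (restrCLM (S.Γs q) y)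

lemma cAt_eq (S : System Γ) (q : ℕ) (γ : Γ) :
    cAt S q γ = ∑ η : ↥(S.Γs q), (S.i q (eSingle (S.Γs q) ↑η) γ) • evalS S ↑η := by
  ext x
  show evalL γ (S.i q (restrCLM (S.Γs q) (x : Linf Γ))) = _
  rw [restr_decomp, map_sum, map_sum, ContinuousLinearMap.sum_apply]
  refine Finset.sum_congr rfl fun η _ => ?_
  rw [map_smul, map_smul, ContinuousLinearMap.smul_apply, evalS_apply]
  simp only [evalL_apply, smul_eq_mul]
  ring

lemma evalS_eq_dstar_add_cstar (S : System Γ) (γ : Γ) :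
    evalS S γ = dstar S γ + cstar S γ := by
  rw [dstar, sub_add_cancel]

lemma evalS_mem (S : System Γ) (γ : Γ) :
    evalS S γ ∈ Submodule.span ℝ (Set.range (dstar S)) := by
  suffices H : ∀ n, ∀ γ : Γ, S.rk γ ≤ n →
      evalS S γ ∈ Submodule.span ℝ (Set.range (dstar S)) from H (S.rk γ) γ le_rfl
  intro n
  induction n with
  | zero =>
    intro γ hγ
    have h0 : S.rk γ = 0 := Nat.le_zero.mp hγ
    have : cstar S γ = 0 := by rw [cstar, if_pos h0]
    rw [evalS_eq_dstar_add_cstar, this, add_zero]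
    exact Submodule.subset_span ⟨γ, rfl⟩
  | succ n ih =>
    intro γ hγ
    by_cases h : S.rk γ ≤ n
    · exact ih γ h
    · have h1 : S.rk γ = n + 1 := le_antisymm hγ (not_le.mp h)
      have h2 : cstar S γ = cAt S n γ := by
        rw [cstar, if_neg (by omega), h1]
        norm_num
      rw [evalS_eq_dstar_add_cstar, h2, cAt_eq]
      refine Submodule.add_mem _ (Submodule.subset_span ⟨γ, rfl⟩) ?_
      exact Submodule.sum_mem _ fun η _ =>
        Submodule.smul_mem _ _ (ih ↑η (S.rk_le η.2))

lemma comp_proj_eq (S : System Γ) (f : ↥S.space →L[ℝ] ℝ) (q : ℕ) :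
    f.comp (proj S q) = ∑ η : ↥(S.Γs q),
      f ⟨S.i q (eSingle (S.Γs q) ↑η), i_mem_space S q _⟩ • evalS S ↑η := by
  ext x
  have hx : proj S q x = ∑ η : ↥(S.Γs q),
      (x : Linf Γ) ↑η • (⟨S.i q (eSingle (S.Γs q) ↑η), i_mem_space S q _⟩ : ↥S.space) := by
    apply Subtype.ext
    show S.i q (restrCLM (S.Γs q) (x : Linf Γ)) = _
    rw [restr_decomp, map_sum]
    push_cast
    exact Finset.sum_congr rfl fun η _ => by rw [map_smul]
  rw [ContinuousLinearMap.comp_apply, hx, map_sum, ContinuousLinearMap.sum_apply]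
  refine Finset.sum_congr rfl fun η _ => ?_
  rw [map_smul, ContinuousLinearMap.smul_apply, evalS_apply]
  simp only [smul_eq_mul]
  ring

lemma comp_proj_mem (S : System Γ) (f : ↥S.space →L[ℝ] ℝ) (q : ℕ) :
    f.comp (proj S q) ∈ Submodule.span ℝ (Set.range (dstar S)) := by
  rw [comp_proj_eq]
  exact Submodule.sum_mem _ fun η _ => Submodule.smul_mem _ _ (evalS_mem S ↑η)

lemma dstarSpan_top (S : System Γ)
    (hshrinking : ∀ f : ↥S.space →L[ℝ] ℝ,
      Filter.Tendsto
        (fun q => ‖f.comp (ContinuousLinearMap.id ℝ ↥S.space - BD.proj S q)‖)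
        Filter.atTop (nhds 0)) :
    dstarSpan S = ⊤ := by
  rw [eq_top_iff]
  intro f _
  have htend : Filter.Tendsto (fun q => f.comp (proj S q)) Filter.atTop (nhds f) := by
    rw [tendsto_iff_norm_sub_tendsto_zero]
    have heq : (fun q => ‖f.comp (proj S q) - f‖) =
        fun q => ‖f.comp (ContinuousLinearMap.id ℝ ↥S.space - BD.proj S q)‖ := by
      funext q
      rw [ContinuousLinearMap.comp_sub, ContinuousLinearMap.comp_id, norm_sub_rev]
    rw [heq]
    exact hshrinking f
  have hcl : f ∈ closure (↑(Submodule.span ℝ (Set.range (dstar S))) :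
      Set (↥S.space →L[ℝ] ℝ)) :=
    mem_closure_of_tendsto htend (Filter.Eventually.of_forall fun q => comp_proj_mem S f q)
  show f ∈ dstarSpan S
  rw [dstarSpan, ← SetLike.mem_coe, Submodule.topologicalClosure_coe]
  exact hcl

end BD
namespace BD
variable {Γ : Type*}

lemma norm_i_le (S : System Γ) (q : ℕ) : ‖S.i q‖ ≤ S.C :=
  le_ciSup S.bdd q

lemma one_le_C (S : System Γ) : 1 ≤ S.C := by
  obtain ⟨η, hη⟩ := S.nonempty 0
  have h1 : S.i 0 (eSingle (S.Γs 0) η) η = 1 := by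
    have h := S.extension 0 (eSingle (S.Γs 0) η) ⟨η, hη⟩
    rw [show ((⟨η, hη⟩ : ↥(S.Γs 0)) : Γ) = η from rfl] at h
    rw [h]
    simp [eSingle]
  have h2 : (1 : ℝ) ≤ ‖S.i 0 (eSingle (S.Γs 0) η)‖ := by
    have := lp.norm_apply_le_norm ENNReal.top_ne_zero (S.i 0 (eSingle (S.Γs 0) η)) η
    rw [h1] at this
    simpa using this
  have h3 : ‖S.i 0 (eSingle (S.Γs 0) η)‖ ≤ ‖S.i 0‖ := by
    calc ‖S.i 0 (eSingle (S.Γs 0) η)‖ ≤ ‖S.i 0‖ * ‖eSingle (S.Γs 0) η‖ :=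
      (S.i 0).le_opNorm _
    _ ≤ ‖S.i 0‖ * 1 := mul_le_mul_of_nonneg_left (norm_eSingle_le _ _) (norm_nonneg _)
    _ = ‖S.i 0‖ := mul_one _
  exact (h2.trans h3).trans (norm_i_le S 0)

lemma C_pos (S : System Γ) : 0 < S.C := lt_of_lt_of_le one_pos (one_le_C S)

lemma countable_Γ (S : System Γ) : Countable Γ := by
  have huniv : (Set.univ : Set Γ) ⊆ ⋃ q, ↑(S.Γs q) := fun γ _ => by
    obtain ⟨q, hq⟩ := S.covers γ
    exact Set.mem_iUnion.mpr ⟨q, hq⟩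
  have hc : (Set.univ : Set Γ).Countable :=
    (Set.countable_iUnion fun q => (S.Γs q).countable_toSet).mono huniv
  exact Set.countable_univ_iff.mp hc

lemma infinite_Γ (S : System Γ) : Infinite Γ := by
  have hcard : ∀ q, q + 1 ≤ (S.Γs q).card := by
    intro q
    induction q with
    | zero => exact Finset.card_pos.mpr (S.nonempty 0)
    | succ q ih =>
      have := Finset.card_lt_card (S.strict (lt_add_one q))
      omega
  rw [← not_finite_iff_infinite]
  intro hfin
  have := Fintype.ofFinite Γ
  have h1 := hcard (Fintype.card Γ)
  have h2 := Finset.card_le_univ (S.Γs (Fintype.card Γ))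
  omega

lemma norm_lp_one (b : lp (fun _ : ℕ => ℝ) 1) : ‖b‖ = ∑' n, ‖b n‖ := by
  rw [lp.norm_eq_tsum_rpow (by norm_num) b]
  norm_num

lemma summable_lp_one (b : lp (fun _ : ℕ => ℝ) 1) : Summable fun n => ‖b n‖ := by
  have := (lp.memℓp b).summable (p := 1) (by norm_num)
  simpa using this

lemma summable_mul_apply (S : System Γ) (e : ℕ ≃ Γ) (b : lp (fun _ : ℕ => ℝ) 1)
    (x : Linf Γ) : Summable fun n => b n * x (e n) := by
  refine Summable.of_norm_bounded (g := fun n => ‖b n‖ * ‖x‖) ((summable_lp_one b).mul_right ‖x‖)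
    fun n => ?_
  rw [norm_mul]
  exact mul_le_mul_of_nonneg_left (lp.norm_apply_le_norm ENNReal.top_ne_zero x (e n))
    (norm_nonneg _)

/-- `R b` as a linear functional on the Bourgain–Delbaen space. -/
def RfunLM (S : System Γ) (e : ℕ ≃ Γ) (b : lp (fun _ : ℕ => ℝ) 1) :
    ↥S.space →ₗ[ℝ] ℝ where
  toFun x := ∑' n, b n * (x : Linf Γ) (e n)
  map_add' x y := by
    rw [← Summable.tsum_add (summable_mul_apply S e b ↑x) (summable_mul_apply S e b ↑y)]
    refine tsum_congr fun n => ?_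
    have h : ((x + y : ↥S.space) : Linf Γ) (e n) =
        (x : Linf Γ) (e n) + (y : Linf Γ) (e n) := by
      rw [Submodule.coe_add, lp.coeFn_add]
      rfl
    rw [h, mul_add]
  map_smul' c x := by
    rw [RingHom.id_apply, smul_eq_mul, ← tsum_mul_left]
    refine tsum_congr fun n => ?_
    have h : ((c • x : ↥S.space) : Linf Γ) (e n) = c * (x : Linf Γ) (e n) := by
      rw [Submodule.coe_smul, lp.coeFn_smul]
      rfl
    rw [h]
    ring

lemma norm_RfunLM_apply_le (S : System Γ) (e : ℕ ≃ Γ) (b : lp (fun _ : ℕ => ℝ) 1)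
    (x : ↥S.space) : ‖RfunLM S e b x‖ ≤ ‖b‖ * ‖x‖ := by
  show ‖∑' n, b n * (x : Linf Γ) (e n)‖ ≤ ‖b‖ * ‖x‖
  refine le_trans (norm_tsum_le_tsum_norm (summable_mul_apply S e b ↑x).norm) ?_
  rw [norm_lp_one, ← tsum_mul_right]
  refine Summable.tsum_le_tsum (fun n => ?_) (summable_mul_apply S e b ↑x).norm
    ((summable_lp_one b).mul_right _)
  rw [norm_mul]
  exact mul_le_mul_of_nonneg_left (lp.norm_apply_le_norm ENNReal.top_ne_zero (x : Linf Γ) (e n))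
    (norm_nonneg _)

/-- `R b` as a continuous linear functional. -/
def Rfun (S : System Γ) (e : ℕ ≃ Γ) (b : lp (fun _ : ℕ => ℝ) 1) : ↥S.space →L[ℝ] ℝ :=
  LinearMap.mkContinuous (RfunLM S e b) ‖b‖ (norm_RfunLM_apply_le S e b)

lemma Rfun_apply (S : System Γ) (e : ℕ ≃ Γ) (b : lp (fun _ : ℕ => ℝ) 1) (x : ↥S.space) :
    Rfun S e b x = ∑' n, b n * (x : Linf Γ) (e n) := rfl

lemma norm_Rfun_le (S : System Γ) (e : ℕ ≃ Γ) (b : lp (fun _ : ℕ => ℝ) 1) :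
    ‖Rfun S e b‖ ≤ ‖b‖ :=
  LinearMap.mkContinuous_norm_le _ (norm_nonneg b) _

/-- The map `R : ℓ1(ℕ) → 𝔛*` as a continuous linear map. -/
def Rmap (S : System Γ) (e : ℕ ≃ Γ) :
    lp (fun _ : ℕ => ℝ) 1 →L[ℝ] (↥S.space →L[ℝ] ℝ) :=
  LinearMap.mkContinuous
    { toFun := Rfun S e
      map_add' := fun b c => by
        ext x
        rw [ContinuousLinearMap.add_apply, Rfun_apply, Rfun_apply, Rfun_apply,
          ← Summable.tsum_add (summable_mul_apply S e b ↑x) (summable_mul_apply S e c ↑x)]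
        refine tsum_congr fun n => ?_
        rw [lp.coeFn_add, Pi.add_apply, add_mul]
      map_smul' := fun c b => by
        ext x
        rw [RingHom.id_apply, ContinuousLinearMap.smul_apply, Rfun_apply, Rfun_apply,
          smul_eq_mul, ← tsum_mul_left]
        refine tsum_congr fun n => ?_
        rw [lp.coeFn_smul, Pi.smul_apply, smul_eq_mul]
        ring }
    1 fun b => by
      rw [one_mul]
      exact norm_Rfun_le S e b

lemma Rmap_apply (S : System Γ) (e : ℕ ≃ Γ) (b : lp (fun _ : ℕ => ℝ) 1) (x : ↥S.space) :
    Rmap S e b x = ∑' n, b n * (x : Linf Γ) (e n) := rfl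

lemma norm_Rmap_le (S : System Γ) (e : ℕ ≃ Γ) : ‖Rmap S e‖ ≤ 1 :=
  LinearMap.mkContinuous_norm_le _ zero_le_one _

end BD
namespace BD
variable {Γ : Type*}

lemma norm_le_C_mul_norm_Rmap (S : System Γ) (e : ℕ ≃ Γ) (b : lp (fun _ : ℕ => ℝ) 1) :
    ‖b‖ ≤ S.C * ‖Rmap S e b‖ := by
  classical
  refine le_of_forall_pos_le_add fun ε hε => ?_
  have hCpos := C_pos S
  set ε' := ε / (1 + S.C) with hε'def
  have h1C : (0:ℝ) < 1 + S.C := by linarith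
  have hε'pos : 0 < ε' := div_pos hε h1C
  have hε'eq : (1 + S.C) * ε' = ε := by
    rw [hε'def, mul_div_cancel₀ _ (ne_of_gt h1C)]
  have hsum := summable_lp_one b
  set t := ∑' n, ‖b n‖ with ht
  have hbt : ‖b‖ = t := norm_lp_one b
  obtain ⟨N, hN⟩ :=
    (hsum.hasSum.tendsto_sum_nat.eventually
      (eventually_gt_nhds (show t - ε' < t by linarith))).exists
  -- choose q so that e '' (range N) ⊆ Γs q
  set q := (Finset.range N).sup fun i => S.rk (e i) with hq
  have hqmem : ∀ i ∈ Finset.range N, e i ∈ S.Γs q := fun i hi =>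
    S.strict.monotone (Finset.le_sup hi) (S.rk_mem (e i))
  set F : Finset ℕ := (S.Γs q).image fun γ => e.symm γ with hF
  have hrangeF : Finset.range N ⊆ F := fun i hi =>
    Finset.mem_image.mpr ⟨e i, hqmem i hi, e.symm_apply_apply i⟩
  have hmemF : ∀ n ∈ F, e n ∈ S.Γs q := by
    intro n hn
    obtain ⟨γ, hγ, rfl⟩ := Finset.mem_image.mp hn
    rwa [e.apply_symm_apply]
  -- the sign vector
  set u : ↥(S.Γs q) → ℝ := fun δ => if b (e.symm ↑δ) < 0 then -1 else 1 with hu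
  have hunorm : ‖u‖ ≤ 1 := by
    refine (pi_norm_le_iff_of_nonneg zero_le_one).2 fun δ => ?_
    rw [hu]
    dsimp only
    split_ifs <;> norm_num
  set x : Linf Γ := S.i q u with hx
  have hxnorm : ‖x‖ ≤ S.C := by
    calc ‖x‖ ≤ ‖S.i q‖ * ‖u‖ := (S.i q).le_opNorm u
    _ ≤ S.C * 1 := mul_le_mul (norm_i_le S q) hunorm (norm_nonneg u) (le_of_lt hCpos)
    _ = S.C := mul_one _
  set xx : ↥S.space := ⟨x, i_mem_space S q u⟩ with hxx
  have hxxnorm : ‖xx‖ ≤ S.C := by rw [Submodule.coe_norm]; exact hxnorm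
  set f : ℕ → ℝ := fun n => b n * x (e n) with hf
  have hfsummable : Summable f := summable_mul_apply S e b x
  have hfF : ∀ n ∈ F, f n = ‖b n‖ := by
    intro n hn
    have hx_en : x (e n) = u ⟨e n, hmemF n hn⟩ := S.extension q u ⟨e n, hmemF n hn⟩
    rw [hf]
    dsimp only
    rw [hx_en, hu]
    dsimp only
    rw [e.symm_apply_apply]
    split_ifs with h
    · rw [Real.norm_eq_abs, abs_of_neg h]; ring
    · rw [Real.norm_eq_abs, abs_of_nonneg (not_lt.mp h)]; ring
  -- split the sums over F and its complement
  have hsplit1 : (∑' (n : ↥(F : Set ℕ)), f ↑n) + ∑' (n : ↥((F : Set ℕ)ᶜ)), f ↑n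
      = ∑' n, f n := Summable.tsum_add_tsum_compl (hfsummable.subtype _) (hfsummable.subtype _)
  have hsplit2 : (∑' (n : ↥(F : Set ℕ)), ‖b n‖) + ∑' (n : ↥((F : Set ℕ)ᶜ)), ‖b ↑n‖
      = t := Summable.tsum_add_tsum_compl (hsum.subtype _) (hsum.subtype _)
  have hFf : (∑' (n : ↥(F : Set ℕ)), f ↑n) = ∑ n ∈ F, ‖b n‖ := by
    rw [Finset.tsum_subtype' F f]
    exact Finset.sum_congr rfl hfF
  have hFb : (∑' (n : ↥(F : Set ℕ)), ‖b ↑n‖) = ∑ n ∈ F, ‖b n‖ :=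
    Finset.tsum_subtype' F fun n => ‖b n‖
  have hFbig : t - ε' < ∑ n ∈ F, ‖b n‖ :=
    lt_of_lt_of_le hN (Finset.sum_le_sum_of_subset_of_nonneg hrangeF
      fun n _ _ => norm_nonneg _)
  -- tail bounds
  have htailb : (∑' (n : ↥((F : Set ℕ)ᶜ)), ‖b ↑n‖) ≤ ε' := by
    have := hsplit2
    rw [hFb] at this
    linarith
  have htailb_nonneg : (0:ℝ) ≤ ∑' (n : ↥((F : Set ℕ)ᶜ)), ‖b ↑n‖ :=
    tsum_nonneg fun n => norm_nonneg _
  have htailf : ‖∑' (n : ↥((F : Set ℕ)ᶜ)), f ↑n‖ ≤ S.C * ε' := by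
    have hb1 : ‖∑' (n : ↥((F : Set ℕ)ᶜ)), f ↑n‖ ≤ ∑' (n : ↥((F : Set ℕ)ᶜ)), ‖f ↑n‖ :=
      norm_tsum_le_tsum_norm ((hfsummable.norm).subtype _)
    have hb2 : (∑' (n : ↥((F : Set ℕ)ᶜ)), ‖f ↑n‖) ≤
        ∑' (n : ↥((F : Set ℕ)ᶜ)), S.C * ‖b ↑n‖ := by
      refine Summable.tsum_le_tsum (fun n => ?_) ((hfsummable.norm).subtype _)
        (((hsum.mul_left S.C)).subtype _)
      rw [hf]
      dsimp only
      rw [norm_mul, mul_comm]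
      refine mul_le_mul ?_ le_rfl (norm_nonneg _) (le_of_lt hCpos)
      exact (lp.norm_apply_le_norm ENNReal.top_ne_zero x (e ↑n)).trans hxnorm
    have hb3 : (∑' (n : ↥((F : Set ℕ)ᶜ)), S.C * ‖b ↑n‖) ≤ S.C * ε' := by
      rw [tsum_mul_left]
      exact mul_le_mul_of_nonneg_left htailb (le_of_lt hCpos)
    linarith
  -- the value of the functional
  have hval : (∑' n, f n) = Rmap S e b xx := rfl
  have hvalbound : ‖∑' n, f n‖ ≤ ‖Rmap S e b‖ * S.C := by
    rw [hval]
    calc ‖Rmap S e b xx‖ ≤ ‖Rmap S e b‖ * ‖xx‖ := (Rmap S e b).le_opNorm xx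
    _ ≤ ‖Rmap S e b‖ * S.C := mul_le_mul_of_nonneg_left hxxnorm (norm_nonneg _)
  -- put it together
  have key : ∑ n ∈ F, ‖b n‖ ≤ ‖Rmap S e b‖ * S.C + S.C * ε' := by
    have h1 : ∑ n ∈ F, ‖b n‖ = (∑' n, f n) - ∑' (n : ↥((F : Set ℕ)ᶜ)), f ↑n := by
      rw [← hFf]; linarith [hsplit1]
    rw [h1]
    calc (∑' n, f n) - ∑' (n : ↥((F : Set ℕ)ᶜ)), f ↑n
        ≤ ‖∑' n, f n‖ + ‖∑' (n : ↥((F : Set ℕ)ᶜ)), f ↑n‖ := by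
          have := le_abs_self (∑' n, f n)
          have h2 := neg_abs_le (∑' (n : ↥((F : Set ℕ)ᶜ)), f ↑n)
          rw [Real.norm_eq_abs, Real.norm_eq_abs]
          linarith
    _ ≤ ‖Rmap S e b‖ * S.C + S.C * ε' := add_le_add hvalbound htailf
  rw [hbt]
  have : t < ‖Rmap S e b‖ * S.C + S.C * ε' + ε' := by linarith
  calc t ≤ ‖Rmap S e b‖ * S.C + S.C * ε' + ε' := le_of_lt this
  _ = S.C * ‖Rmap S e b‖ + (1 + S.C) * ε' := by ring
  _ = S.C * ‖Rmap S e b‖ + ε := by rw [hε'eq]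

end BD
namespace BD
variable {Γ : Type*}

lemma evalS_eq_Rmap_single (S : System Γ) (e : ℕ ≃ Γ) (γ : Γ) :
    evalS S γ = Rmap S e (lp.single 1 (e.symm γ) 1) := by
  classical
  ext x
  rw [Rmap_apply, evalS_apply]
  symm
  rw [tsum_eq_single (e.symm γ) ?_]
  · rw [lp.single_apply_self, one_mul, e.apply_symm_apply]
  · intro n hn
    rw [lp.single_apply_ne _ _ _ hn, zero_mul]

lemma dstar_mem_range (S : System Γ) (e : ℕ ≃ Γ) (γ : Γ) :
    dstar S γ ∈ LinearMap.range (Rmap S e).toLinearMap := by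
  have hev : ∀ δ : Γ, evalS S δ ∈ LinearMap.range (Rmap S e).toLinearMap := fun δ =>
    ⟨lp.single 1 (e.symm δ) 1, (evalS_eq_Rmap_single S e δ).symm⟩
  have hc : cstar S γ ∈ LinearMap.range (Rmap S e).toLinearMap := by
    rw [cstar]
    split_ifs
    · exact Submodule.zero_mem _
    · rw [cAt_eq]
      exact Submodule.sum_mem _ fun η _ => Submodule.smul_mem _ _ (hev ↑η)
  exact Submodule.sub_mem _ (hev γ) hc

lemma Rmap_surjective (S : System Γ) (e : ℕ ≃ Γ) (htop : dstarSpan S = ⊤) :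
    Function.Surjective (Rmap S e) := by
  have hanti : AntilipschitzWith (S.C.toNNReal) (Rmap S e) :=
    (Rmap S e).antilipschitz_of_bound fun b => by
      rw [Real.coe_toNNReal _ (le_of_lt (C_pos S))]
      exact norm_le_C_mul_norm_Rmap S e b
  have hclosed : IsClosed (Set.range (Rmap S e)) :=
    hanti.isClosed_range (Rmap S e).uniformContinuous
  have hle : dstarSpan S ≤ LinearMap.range (Rmap S e).toLinearMap := by
    refine Submodule.topologicalClosure_minimal _ ?_ ?_
    · rw [Submodule.span_le]
      rintro _ ⟨γ, rfl⟩
      exact dstar_mem_range S e γ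
    · show IsClosed ((LinearMap.range (Rmap S e).toLinearMap : Submodule ℝ _) : Set (↥S.space →L[ℝ] ℝ))
      rw [LinearMap.coe_range]
      exact hclosed
  have hrange : LinearMap.range (Rmap S e).toLinearMap = ⊤ := top_unique (htop ▸ hle)
  exact LinearMap.range_eq_top.mp hrange

end BD

theorem statement7' {Γ : Type*} (S : BD.System Γ)
    (hshrinking : ∀ f : ↥S.space →L[ℝ] ℝ,
      Filter.Tendsto
        (fun q => ‖f.comp (ContinuousLinearMap.id ℝ ↥S.space - BD.proj S q)‖)
        Filter.atTop (nhds 0)) :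
    BD.dstarSpan S = ⊤ ∧
    ∃ T : (↥S.space →L[ℝ] ℝ) ≃L[ℝ] lp (fun _ : ℕ => ℝ) 1,
      ‖(T : (↥S.space →L[ℝ] ℝ) →L[ℝ] lp (fun _ : ℕ => ℝ) 1)‖ *
        ‖(T.symm : lp (fun _ : ℕ => ℝ) 1 →L[ℝ] (↥S.space →L[ℝ] ℝ))‖ ≤ S.C := by
  have htop := BD.dstarSpan_top S hshrinking
  refine ⟨htop, ?_⟩
  have hCpos := BD.C_pos S
  have hcount : Countable Γ := BD.countable_Γ S
  have hinf : Infinite Γ := BD.infinite_Γ S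
  obtain ⟨d⟩ := nonempty_denumerable_iff.mpr ⟨hcount, hinf⟩
  let e : ℕ ≃ Γ := (Denumerable.eqv Γ).symm
  set R := BD.Rmap S e with hR
  have hanti : ∀ b, ‖b‖ ≤ S.C * ‖R b‖ := BD.norm_le_C_mul_norm_Rmap S e
  have hinj : Function.Injective R := by
    intro a b hab
    have h := hanti (a - b)
    rw [map_sub, hab, sub_self, norm_zero, mul_zero] at h
    exact sub_eq_zero.mp (norm_le_zero_iff.mp h)
  have hsurj := BD.Rmap_surjective S e htop
  have hbij : Function.Bijective R := ⟨hinj, hsurj⟩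
  let L := LinearEquiv.ofBijective (R : lp (fun _ : ℕ => ℝ) 1 →ₗ[ℝ] (↥S.space →L[ℝ] ℝ)) hbij
  have hLapp : ∀ b, L b = R b := fun b => rfl
  have hbound : ∀ f : ↥S.space →L[ℝ] ℝ, ‖L.symm f‖ ≤ S.C * ‖f‖ := by
    intro f
    have h1 : R (L.symm f) = f := L.apply_symm_apply f
    have h2 := hanti (L.symm f)
    rw [h1] at h2
    exact h2
  let Tcont : (↥S.space →L[ℝ] ℝ) →L[ℝ] lp (fun _ : ℕ => ℝ) 1 :=
    LinearMap.mkContinuous (L.symm : (↥S.space →L[ℝ] ℝ) →ₗ[ℝ] lp (fun _ : ℕ => ℝ) 1)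
      S.C hbound
  let T : (↥S.space →L[ℝ] ℝ) ≃L[ℝ] lp (fun _ : ℕ => ℝ) 1 :=
    ContinuousLinearEquiv.equivOfInverse Tcont R
      (fun f => L.apply_symm_apply f) (fun b => L.symm_apply_apply b)
  refine ⟨T, ?_⟩
  have hT : ‖(T : (↥S.space →L[ℝ] ℝ) →L[ℝ] lp (fun _ : ℕ => ℝ) 1)‖ ≤ S.C := by
    refine ContinuousLinearMap.opNorm_le_bound _ (le_of_lt hCpos) fun f => ?_
    show ‖L.symm f‖ ≤ S.C * ‖f‖
    exact hbound f
  have hTsymm : ‖(T.symm : lp (fun _ : ℕ => ℝ) 1 →L[ℝ] (↥S.space →L[ℝ] ℝ))‖ ≤ 1 := by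
    refine ContinuousLinearMap.opNorm_le_bound _ zero_le_one fun b => ?_
    rw [one_mul]
    show ‖R b‖ ≤ ‖b‖
    exact BD.norm_Rfun_le S e b
  calc ‖(T : (↥S.space →L[ℝ] ℝ) →L[ℝ] lp (fun _ : ℕ => ℝ) 1)‖ *
        ‖(T.symm : lp (fun _ : ℕ => ℝ) 1 →L[ℝ] (↥S.space →L[ℝ] ℝ))‖
      ≤ S.C * 1 := mul_le_mul hT hTsymm (norm_nonneg _) (le_of_lt hCpos)
  _ = S.C := mul_one _

/-- If the FDD `(M_q)_q` of a Bourgain–Delbaen space is shrinking (i.e. for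
every `f` in the dual, `‖f ∘ (I - P_{[0,q]})‖ → 0`), then the dual equals the closed linear
span of the `(d_γ^*)_{γ∈Γ}`; in particular the dual is `C`-isomorphic to `ℓ1`. -/
theorem statement7 {Γ : Type*} (S : BD.System Γ)
    (hshrinking : ∀ f : ↥S.space →L[ℝ] ℝ,
      Filter.Tendsto
        (fun q => ‖f.comp (ContinuousLinearMap.id ℝ ↥S.space - BD.proj S q)‖)
        Filter.atTop (nhds 0)) :
    BD.dstarSpan S = ⊤ ∧
    ∃ T : (↥S.space →L[ℝ] ℝ) ≃L[ℝ] lp (fun _ : ℕ => ℝ) 1,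
      ‖(T : (↥S.space →L[ℝ] ℝ) →L[ℝ] lp (fun _ : ℕ => ℝ) 1)‖ *
        ‖(T.symm : lp (fun _ : ℕ => ℝ) 1 →L[ℝ] (↥S.space →L[ℝ] ℝ))‖ ≤ S.C := by
  exact statement7' S hshrinking
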